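/- For α ∈ ℝ with α ∉ {0, 1}, the Fenchel conjugate of f(u) = (u^α − 1 − α(u − 1))/(α(α − 1)) (for u > 0) satisfies f*(t) = (1/α)·(t(α − 1) + 1)^{α/(α−1)} − 1/α for t in the domain where t(α − 1) + 1 > 0 (for α < 1 the condition is t < 1/(1−α); for α > 1 the formula holds where t(α−1)+1 > 0). -/

import Mathlib

/-- Bernoulli-type inequality for negative exponent. -/
lemma bernoulli_neg_exp {x α : ℝ} (hx : 0 < x) (hα : α < 0) :
    1 + α * (x - 1) ≤ x ^ α := by
  have h1 : x ^ α = Real.exp (α * Real.log x) := by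
    rw [Real.rpow_def_of_pos hx, mul_comm]
  have h2 : α * Real.log x + 1 ≤ Real.exp (α * Real.log x) := Real.add_one_le_exp _
  have h3 : Real.log x ≤ x - 1 := Real.log_le_sub_one_of_pos hx
  nlinarith

/-- The Fenchel conjugate of the α-divergence generator
`f(u) = (u^α - 1 - α (u - 1)) / (α (α - 1))` (over `u > 0`), for `α ∉ {0, 1}` and
`t` with `t (α - 1) + 1 > 0`, is `f*(t) = (1/α) (t (α - 1) + 1)^(α/(α-1)) - 1/α`. -/
theorem fenchel_conjugate_alpha_div (α t : ℝ) (hα0 : α ≠ 0) (hα1 : α ≠ 1)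
    (ht : 0 < t * (α - 1) + 1) :
    IsLUB {x : ℝ | ∃ u : ℝ, 0 < u ∧
        x = u * t - (u ^ α - 1 - α * (u - 1)) / (α * (α - 1))}
      (1 / α * (t * (α - 1) + 1) ^ (α / (α - 1)) - 1 / α) := by
  have hα1' : α - 1 ≠ 0 := sub_ne_zero.2 hα1
  set s : ℝ := t * (α - 1) + 1 with hs_def
  have hs : 0 < s := ht
  set w : ℝ := s ^ (1 / (α - 1)) with hw_def
  have hw : 0 < w := Real.rpow_pos_of_pos hs _
  have hwα : w ^ α = s * w := by
    rw [hw_def, ← Real.rpow_mul hs.le,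
      show 1 / (α - 1) * α = 1 + 1 / (α - 1) by field_simp; ring,
      Real.rpow_add hs, Real.rpow_one]
  have hsexp : s ^ (α / (α - 1)) = s * w := by
    rw [show α / (α - 1) = 1 / (α - 1) * α by ring, Real.rpow_mul hs.le, ← hw_def, hwα]
  apply IsGreatest.isLUB
  constructor
  · refine ⟨w, hw, ?_⟩
    rw [hwα, hsexp, hs_def]
    field_simp
    ring
  · rintro x ⟨u, hu, rfl⟩
    rw [← sub_nonneg]
    have hxw : 0 < u / w := div_pos hu hw
    have hkey : 0 ≤ ((u / w) ^ α - 1 - α * (u / w - 1)) / (α * (α - 1)) := by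
      have hm1 : (-1 : ℝ) ≤ u / w - 1 := by linarith
      have hrw : (1 : ℝ) + (u / w - 1) = u / w := by ring
      rcases lt_trichotomy α 0 with hneg | h0 | hpos
      · have hnum : 0 ≤ (u / w) ^ α - 1 - α * (u / w - 1) := by
          have := bernoulli_neg_exp hxw hneg
          linarith
        have hden : 0 < α * (α - 1) := mul_pos_of_neg_of_neg hneg (by linarith)
        exact div_nonneg hnum hden.le
      · exact absurd h0 hα0
      · rcases lt_trichotomy α 1 with hlt | h1 | hgt
        · have hnum : (u / w) ^ α - 1 - α * (u / w - 1) ≤ 0 := by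
            have := rpow_one_add_le_one_add_mul_self hm1 hpos.le hlt.le
            rw [hrw] at this
            linarith
          have hden : α * (α - 1) < 0 := mul_neg_of_pos_of_neg hpos (by linarith)
          have := div_nonneg (neg_nonneg.2 hnum) (neg_nonneg.2 hden.le)
          rw [neg_div_neg_eq] at this
          exact this
        · exact absurd h1 hα1
        · have hnum : 0 ≤ (u / w) ^ α - 1 - α * (u / w - 1) := by
            have := one_add_mul_self_le_rpow_one_add hm1 hgt.le
            rw [hrw] at this
            linarith
          have hden : 0 < α * (α - 1) := mul_pos hpos (by linarith)
          exact div_nonneg hnum hden.le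
    have heq : 1 / α * s ^ (α / (α - 1)) - 1 / α -
        (u * t - (u ^ α - 1 - α * (u - 1)) / (α * (α - 1))) =
        w ^ α * (((u / w) ^ α - 1 - α * (u / w - 1)) / (α * (α - 1))) := by
      rw [Real.div_rpow hu.le hw.le, hwα, hsexp, hs_def]
      have hs0 : t * (α - 1) + 1 ≠ 0 := ht.ne'
      field_simp
      ring
    have h2 : 0 ≤ w ^ α * (((u / w) ^ α - 1 - α * (u / w - 1)) / (α * (α - 1))) :=
      mul_nonneg (Real.rpow_pos_of_pos hw α).le hkey
    linarith
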